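/- Let f, g ∈ Homeo⁺(S¹) have rational rotation numbers, let f_t be a positive one-parameter family commuting with f, and suppose g_t = f_t∘g has constant rotation number. Define U(f,g) as the set of points x for which there is a unique t with δ_{f,g}(x,t) = 0. Then U(f,g) is open, and the map T : U(f,g) → ℝ assigning to x the unique such t is continuous. -/

import Mathlib

open Set Function Filter MeasureTheory

/-- An orientation-preserving homeomorphism of `ℝ` commuting with `x ↦ x + 1`,
i.e. a lift of an orientation-preserving circle homeomorphism. -/
structure HomeoZR : Type where
  toFun : ℝ → ℝ
  invFun : ℝ → ℝ
  left_inv : Function.LeftInverse invFun toFun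
  right_inv : Function.RightInverse invFun toFun
  strictMono : StrictMono toFun
  map_add_one : ∀ x, toFun (x + 1) = toFun x + 1

namespace HomeoZR

/-- The identity. -/
protected def id : HomeoZR :=
  ⟨_root_.id, _root_.id, fun _ => rfl, fun _ => rfl, strictMono_id, fun _ => rfl⟩

/-- Composition `f ∘ g`. -/
protected def comp (f g : HomeoZR) : HomeoZR where
  toFun := f.toFun ∘ g.toFun
  invFun := g.invFun ∘ f.invFun
  left_inv := fun x => by
    show g.invFun (f.invFun (f.toFun (g.toFun x))) = x
    rw [f.left_inv, g.left_inv]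
  right_inv := fun x => by
    show f.toFun (g.toFun (g.invFun (f.invFun x))) = x
    rw [g.right_inv, f.right_inv]
  strictMono := f.strictMono.comp g.strictMono
  map_add_one := fun x => by
    show f.toFun (g.toFun (x + 1)) = f.toFun (g.toFun x) + 1
    rw [g.map_add_one, f.map_add_one]

/-- Inverse. -/
protected def symm (f : HomeoZR) : HomeoZR where
  toFun := f.invFun
  invFun := f.toFun
  left_inv := f.right_inv
  right_inv := f.left_inv
  strictMono := by
    intro x y hxy
    rcases lt_trichotomy (f.invFun x) (f.invFun y) with h | h | h
    · exact h
    · exact absurd (by rw [← f.right_inv x, ← f.right_inv y, h]) (ne_of_lt hxy)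
    · have h2 := f.strictMono h
      rw [f.right_inv, f.right_inv] at h2
      exact absurd h2 (lt_asymm hxy)
  map_add_one := fun x => by
    have h1 : f.invFun (f.toFun (f.invFun x + 1)) = f.invFun (x + 1) := by
      rw [f.map_add_one, f.right_inv]
    rw [f.left_inv] at h1
    exact h1.symm

/-- The associated monotone degree-one lift. -/
def toLift (f : HomeoZR) : CircleDeg1Lift :=
  ⟨⟨f.toFun, f.strictMono.monotone⟩, f.map_add_one⟩

/-- The translation number `rot̃(f)`. -/
noncomputable def transNum (f : HomeoZR) : ℝ :=
  f.toLift.translationNumber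

/-- The canonical lift of the underlying circle homeomorphism: the lift whose
translation number lies in `[0,1)`, as a plain function. -/
noncomputable def canon (f : HomeoZR) : ℝ → ℝ :=
  fun x => f.toFun x - (⌊f.transNum⌋ : ℝ)

/-- The periodic points of the underlying circle homeomorphism, as a
`ℤ`-periodic subset of `ℝ`. -/
def Per (f : HomeoZR) : Set ℝ :=
  {x | ∃ n : ℕ, 0 < n ∧ ∃ m : ℤ, f.toFun^[n] x = x + m}

/-- The fixed points of the underlying circle homeomorphism, as a subset of `ℝ`. -/
def FixS (f : HomeoZR) : Set ℝ :=
  {x | ∃ m : ℤ, f.toFun x = x + m}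

/-- `q(f)`: the minimal period of the underlying circle homeomorphism. -/
noncomputable def q (f : HomeoZR) : ℕ :=
  sInf {n : ℕ | 0 < n ∧ ∃ x : ℝ, ∃ m : ℤ, f.toFun^[n] x = x + m}

/-- `p(f)`: the least `p ≥ 0` with `rot(f) = p / q(f)` mod `ℤ`. -/
noncomputable def p (f : HomeoZR) : ℕ :=
  sInf {p : ℕ | ∃ m : ℤ, f.transNum = (p : ℝ) / (f.q : ℝ) + (m : ℝ)}

/-- Natural powers. -/
protected def npow (f : HomeoZR) : ℕ → HomeoZR
  | 0 => HomeoZR.id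
  | n + 1 => (f.npow n).comp f

/-- Integer powers. -/
protected def zpow (f : HomeoZR) (k : ℤ) : HomeoZR :=
  if 0 ≤ k then f.npow k.toNat else f.symm.npow (-k).toNat

end HomeoZR

/-- `f` has rational rotation number. -/
def RatRot (f : HomeoZR) : Prop := ∃ r : ℚ, f.transNum = (r : ℝ)

/-- `F` is a positive one-parameter family (one-parameter group) commuting with `f`:
for `t ≠ 0` the fixed set of `F t` is the frontier of `Per f`, and for `t > 0` the
canonical lift of `F t` moves every point off the frontier strictly to the right. -/
def PosFamily (f : HomeoZR) (F : ℝ → HomeoZR) : Prop :=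
  (∀ s t, (F (s + t)).toFun = (F s).toFun ∘ (F t).toFun) ∧
  (∀ t, (F t).toFun ∘ f.toFun = f.toFun ∘ (F t).toFun) ∧
  (∀ t, t ≠ 0 → (F t).FixS = frontier f.Per) ∧
  (∀ t, 0 < t → ∀ x, x ∉ frontier f.Per → x < (F t).canon x)

/-- `δ_{f,g}(x,t)`, where `F` is a positive one-parameter family commuting with `f`. -/
noncomputable def delta (F : ℝ → HomeoZR) (g : HomeoZR) (x t : ℝ) : ℝ :=
  ((F t).canon ∘ g.canon)^[g.q] x - x - (g.p : ℝ)

/-- Persistent periodic points. -/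
def Pset (F : ℝ → HomeoZR) (g : HomeoZR) : Set ℝ := {x | ∀ t, delta F g x t = 0}

/-- Never-periodic points. -/
def Nset (F : ℝ → HomeoZR) (g : HomeoZR) : Set ℝ := {x | ∀ t, delta F g x t ≠ 0}

/-- Points periodic at a unique time. -/
def Uset (F : ℝ → HomeoZR) (g : HomeoZR) : Set ℝ := {x | ∃! t, delta F g x t = 0}

/-- `x` has a finite orbit in the circle under the group generated by `f` and `g`. -/
def FiniteOrbit (f g : HomeoZR) (x : ℝ) : Prop :=
  ∃ S : Set ℝ, S.Finite ∧ x ∈ S ∧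
    (∀ y ∈ S, ∃ z ∈ S, ∃ m : ℤ, f.toFun y = z + m) ∧
    (∀ y ∈ S, ∃ z ∈ S, ∃ m : ℤ, g.toFun y = z + m)

/-- `τ(f_1, …, f_n) = rot̃(f_n ∘ ⋯ ∘ f_1) − Σ rot̃(f_i)`. -/
noncomputable def tau (L : List HomeoZR) : ℝ :=
  (L.foldl (fun h u => u.comp h) HomeoZR.id).transNum
    - (L.map HomeoZR.transNum).sum

/-! ### Auxiliary development -/

local notation "τ" => CircleDeg1Lift.translationNumber

namespace HomeoZR

lemma coe_toLift (f : HomeoZR) : ⇑f.toLift = f.toFun := rfl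

lemma surjectiveFun (f : HomeoZR) : Function.Surjective f.toFun :=
  fun y => ⟨f.invFun y, f.right_inv y⟩

lemma continuousFun (f : HomeoZR) : Continuous f.toFun :=
  (CircleDeg1Lift.continuous_iff_surjective f.toLift).2 f.surjectiveFun

lemma canon_def (f : HomeoZR) (x : ℝ) :
    f.canon x = f.toFun x - (⌊f.transNum⌋ : ℝ) := rfl

lemma canon_strictMono (f : HomeoZR) : StrictMono f.canon := fun _a _b h =>
  sub_lt_sub_right (f.strictMono h) _

lemma canon_continuous (f : HomeoZR) : Continuous f.canon :=
  f.continuousFun.sub continuous_const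

lemma map_add_int' (f : HomeoZR) (x : ℝ) (m : ℤ) :
    f.toFun (x + m) = f.toFun x + m := f.toLift.map_add_int x m

lemma map_sub_int' (f : HomeoZR) (x : ℝ) (m : ℤ) :
    f.toFun (x - m) = f.toFun x - m := f.toLift.map_sub_int x m

lemma toLift_comp (f g : HomeoZR) : (f.comp g).toLift = f.toLift * g.toLift := by
  ext x; rfl

end HomeoZR

/-- No injection of `ℝ` into `ℚ`. -/
lemma no_real_rat_injection (Q : ℝ → ℚ) (h : Function.Injective Q) : False := by
  have : Countable ℝ := h.countable
  exact Cardinal.not_countable_real Set.countable_univ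

/-- The abstract structure extracted from a positive one-parameter family in the
case where the frontier of the periodic set is nonempty. `E` plays the role of
the frontier. -/
structure GoodFam (F : ℝ → HomeoZR) (E : Set ℝ) : Prop where
  can0 : ∀ x, (F 0).canon x = x
  canE : ∀ t, ∀ x ∈ E, (F t).canon x = x
  canadd : ∀ s t x, (F s).canon ((F t).canon x) = (F (s + t)).canon x
  pos : ∀ t, 0 < t → ∀ x ∉ E, x < (F t).canon x

namespace GoodFam

variable {F : ℝ → HomeoZR} {E : Set ℝ}

lemma inv_can (h : GoodFam F E) (t x : ℝ) : (F (-t)).canon ((F t).canon x) = x := by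
  rw [h.canadd, neg_add_cancel, h.can0]

lemma le_can (h : GoodFam F E) {t : ℝ} (ht : 0 ≤ t) (x : ℝ) : x ≤ (F t).canon x := by
  rcases eq_or_lt_of_le ht with rfl | ht'
  · rw [h.can0]
  · by_cases hx : x ∈ E
    · rw [h.canE t x hx]
    · exact (h.pos t ht' x hx).le

lemma can_le (h : GoodFam F E) {t : ℝ} (ht : t ≤ 0) (x : ℝ) : (F t).canon x ≤ x := by
  have h1 : (F t).canon x ≤ (F (-t)).canon ((F t).canon x) := h.le_can (by linarith) _
  rwa [h.inv_can] at h1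

lemma can_time_mono (h : GoodFam F E) {s t : ℝ} (hst : s ≤ t) (x : ℝ) :
    (F s).canon x ≤ (F t).canon x := by
  have h1 : (F s).canon x ≤ (F (t - s)).canon ((F s).canon x) :=
    h.le_can (by linarith) _
  rwa [h.canadd, sub_add_cancel] at h1

lemma can_ne (h : GoodFam F E) {t : ℝ} (ht : t ≠ 0) {x : ℝ} (hx : x ∉ E) : (F t).canon x ≠ x := by
  rcases lt_or_gt_of_ne ht with ht' | ht'
  · intro hfix
    have h3 : (F (-t)).canon x = x := by
      conv_lhs => rw [← hfix]
      exact h.inv_can t x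
    have h2 : x < (F (-t)).canon x := h.pos (-t) (by linarith) x hx
    rw [h3] at h2
    exact lt_irrefl _ h2
  · exact (h.pos t ht' x hx).ne'

lemma notE_invariant (h : GoodFam F E) {x : ℝ} (hx : x ∉ E) (t : ℝ) : (F t).canon x ∉ E := by
  intro hmem
  have h1 : (F (-t)).canon ((F t).canon x) = (F t).canon x := h.canE _ _ hmem
  rw [h.inv_can] at h1
  exact hx (h1 ▸ hmem)

end GoodFam

namespace GoodFam

variable {F : ℝ → HomeoZR} {E : Set ℝ}

/-- Right continuity at time `0`: one can move arbitrarily little forward. -/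
lemma approach_right (h : GoodFam F E) (y : ℝ) {ε : ℝ} (hε : 0 < ε) :
    ∃ u : ℝ, 0 < u ∧ (F u).canon y < y + ε := by
  by_cases hyE : y ∈ E
  · exact ⟨1, one_pos, by rw [h.canE 1 y hyE]; linarith⟩
  by_contra hcon
  push_neg at hcon
  have key : ∀ w w' : ℝ, (F w).canon y ≤ (F w').canon y →
      (F w').canon y < (F w).canon (y + ε) → w = w' := by
    intro w w' hle hlt
    have h1 : y ≤ (F (-w + w')).canon y := by
      have := (F (-w)).canon_strictMono.monotone hle
      rwa [h.inv_can, h.canadd] at this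
    have h2 : (F (-w + w')).canon y < y + ε := by
      have := (F (-w)).canon_strictMono hlt
      rwa [h.canadd, h.inv_can] at this
    rcases lt_trichotomy (-w + w') 0 with hu | hu | hu
    · have hlt2 : (F (-w + w')).canon y ≤ y := h.can_le hu.le y
      have hne : (F (-w + w')).canon y ≠ y := h.can_ne hu.ne hyE
      exact absurd (le_antisymm hlt2 h1) hne
    · linarith [neg_add_eq_zero.mp hu]
    · exact absurd h2 (not_lt.2 (hcon _ hu))
  have hQ : ∀ w : ℝ, ∃ q : ℚ, (F w).canon y < q ∧ (q : ℝ) < (F w).canon (y + ε) :=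
    fun w => exists_rat_btwn ((F w).canon_strictMono (by linarith))
  choose Q hQ1 hQ2 using hQ
  refine no_real_rat_injection Q ?_
  intro w w' hww'
  rcases le_total ((F w).canon y) ((F w').canon y) with hle | hle
  · exact key w w' hle (by calc (F w').canon y < (Q w' : ℝ) := hQ1 w'
      _ = (Q w : ℝ) := by rw [hww']
      _ < (F w).canon (y + ε) := hQ2 w)
  · exact (key w' w hle (by calc (F w).canon y < (Q w : ℝ) := hQ1 w
      _ = (Q w' : ℝ) := by rw [hww']
      _ < (F w').canon (y + ε) := hQ2 w')).symm

/-- Left continuity at time `0`. -/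
lemma approach_left (h : GoodFam F E) (y : ℝ) {ε : ℝ} (hε : 0 < ε) :
    ∃ u : ℝ, u < 0 ∧ y - ε < (F u).canon y := by
  by_cases hyE : y ∈ E
  · exact ⟨-1, by norm_num, by rw [h.canE (-1) y hyE]; linarith⟩
  by_contra hcon
  push_neg at hcon
  have key : ∀ w w' : ℝ, (F w').canon y ≤ (F w).canon y →
      (F w).canon (y - ε) < (F w').canon y → w = w' := by
    intro w w' hle hlt
    have h1 : (F (-w + w')).canon y ≤ y := by
      have := (F (-w)).canon_strictMono.monotone hle
      rwa [h.inv_can, h.canadd] at this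
    have h2 : y - ε < (F (-w + w')).canon y := by
      have := (F (-w)).canon_strictMono hlt
      rwa [h.inv_can, h.canadd] at this
    rcases lt_trichotomy (-w + w') 0 with hu | hu | hu
    · exact absurd h2 (not_lt.2 (hcon _ hu))
    · linarith [neg_add_eq_zero.mp hu]
    · have hlt2 : y < (F (-w + w')).canon y := h.pos _ hu y hyE
      exact absurd (le_antisymm h1 hlt2.le) hlt2.ne'
  have hQ : ∀ w : ℝ, ∃ q : ℚ, (F w).canon (y - ε) < q ∧ (q : ℝ) < (F w).canon y :=
    fun w => exists_rat_btwn ((F w).canon_strictMono (by linarith))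
  choose Q hQ1 hQ2 using hQ
  refine no_real_rat_injection Q ?_
  intro w w' hww'
  rcases le_total ((F w').canon y) ((F w).canon y) with hle | hle
  · exact key w w' hle (by calc (F w).canon (y - ε) < (Q w : ℝ) := hQ1 w
      _ = (Q w' : ℝ) := by rw [hww']
      _ < (F w').canon y := hQ2 w')
  · exact (key w' w hle (by calc (F w').canon (y - ε) < (Q w' : ℝ) := hQ1 w'
      _ = (Q w : ℝ) := by rw [hww']
      _ < (F w).canon y := hQ2 w)).symm

/-- Joint continuity along a continuous path. -/
lemma cont_along (h : GoodFam F E) {ψ : ℝ → ℝ} (hψ : Continuous ψ) :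
    Continuous fun t => (F t).canon (ψ t) := by
  rw [continuous_iff_continuousAt]
  intro t₀
  have hA : Continuous fun t => (F t₀).canon (ψ t) :=
    (F t₀).canon_continuous.comp hψ
  set Y := (F t₀).canon (ψ t₀) with hY
  rw [ContinuousAt, Metric.tendsto_nhds]
  intro ε hε
  obtain ⟨u₀, hu₀, hu₀'⟩ := h.approach_right Y (half_pos hε)
  obtain ⟨u₁, hu₁, hu₁'⟩ := h.approach_left Y (half_pos hε)
  have ev1 : ∀ᶠ t in nhds t₀, (F u₀).canon ((F t₀).canon (ψ t)) < Y + ε / 2 := by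
    have hc : Continuous fun t => (F u₀).canon ((F t₀).canon (ψ t)) :=
      (F u₀).canon_continuous.comp hA
    have : (F u₀).canon ((F t₀).canon (ψ t₀)) < Y + ε / 2 := hu₀'
    exact hc.continuousAt.eventually_lt continuousAt_const this
  have ev2 : ∀ᶠ t in nhds t₀, Y - ε / 2 < (F u₁).canon ((F t₀).canon (ψ t)) := by
    have hc : Continuous fun t => (F u₁).canon ((F t₀).canon (ψ t)) :=
      (F u₁).canon_continuous.comp hA
    have : Y - ε / 2 < (F u₁).canon ((F t₀).canon (ψ t₀)) := hu₁'
    exact continuousAt_const.eventually_lt hc.continuousAt this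
  have ev3 : ∀ᶠ t in nhds t₀, t - t₀ < u₀ ∧ u₁ < t - t₀ := by
    have : ∀ᶠ t in nhds t₀, t ∈ Set.Ioo (t₀ + u₁) (t₀ + u₀) := by
      apply Ioo_mem_nhds <;> linarith
    exact this.mono (fun t ht => ⟨by linarith [ht.2], by linarith [ht.1]⟩)
  filter_upwards [ev1, ev2, ev3] with t h1 h2 h3
  have hdecomp : (F t).canon (ψ t) = (F (t - t₀)).canon ((F t₀).canon (ψ t)) := by
    rw [h.canadd, sub_add_cancel]
  have hub : (F t).canon (ψ t) < Y + ε / 2 := by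
    rw [hdecomp]
    calc (F (t - t₀)).canon ((F t₀).canon (ψ t))
        ≤ (F u₀).canon ((F t₀).canon (ψ t)) := h.can_time_mono h3.1.le _
      _ < Y + ε / 2 := h1
  have hlb : Y - ε / 2 < (F t).canon (ψ t) := by
    rw [hdecomp]
    calc Y - ε / 2 < (F u₁).canon ((F t₀).canon (ψ t)) := h2
      _ ≤ (F (t - t₀)).canon ((F t₀).canon (ψ t)) := h.can_time_mono h3.2.le _
  rw [Real.dist_eq, abs_sub_lt_iff]
  constructor <;> linarith

end GoodFam

namespace GoodFam

variable {F : ℝ → HomeoZR} {E : Set ℝ}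

lemma iter_le (h : GoodFam F E) (g : HomeoZR) {s t : ℝ} (hst : s ≤ t) (x : ℝ) :
    ∀ k : ℕ, ((F s).canon ∘ g.canon)^[k] x ≤ ((F t).canon ∘ g.canon)^[k] x := by
  intro k
  induction k with
  | zero => exact le_rfl
  | succ k ih =>
    rw [Function.iterate_succ_apply', Function.iterate_succ_apply']
    calc ((F s).canon ∘ g.canon) (((F s).canon ∘ g.canon)^[k] x)
        ≤ ((F s).canon ∘ g.canon) (((F t).canon ∘ g.canon)^[k] x) := by
          exact ((F s).canon_strictMono.comp g.canon_strictMono).monotone ih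
      _ ≤ ((F t).canon ∘ g.canon) (((F t).canon ∘ g.canon)^[k] x) :=
          h.can_time_mono hst _

lemma delta_time_mono (h : GoodFam F E) (g : HomeoZR) {s t : ℝ} (hst : s ≤ t)
    (x : ℝ) : delta F g x s ≤ delta F g x t := by
  unfold delta
  have := h.iter_le g hst x g.q
  linarith

lemma delta_cont_t (h : GoodFam F E) (g : HomeoZR) (x : ℝ) :
    Continuous fun t => delta F g x t := by
  have key : ∀ k : ℕ, Continuous fun t => ((F t).canon ∘ g.canon)^[k] x := by
    intro k
    induction k with
    | zero => exact continuous_const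
    | succ k ih =>
      have : (fun t => ((F t).canon ∘ g.canon)^[k + 1] x) =
          fun t => (F t).canon (g.canon (((F t).canon ∘ g.canon)^[k] x)) := by
        funext t
        rw [Function.iterate_succ_apply']
        rfl
      rw [this]
      exact h.cont_along (g.canon_continuous.comp ih)
  exact ((key g.q).sub continuous_const).sub continuous_const

lemma delta_cont_x (g : HomeoZR) (F' : ℝ → HomeoZR) (t : ℝ) :
    Continuous fun x => delta F' g x t := by
  have h1 : Continuous ((F' t).canon ∘ g.canon) :=
    (F' t).canon_continuous.comp g.canon_continuous
  exact ((h1.iterate g.q).sub continuous_id).sub continuous_const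

/-- If `δ(x,·)` takes the same value at two distinct times, it is constant. -/
lemma delta_const (h : GoodFam F E) (g : HomeoZR) {x s t : ℝ} (hst : s < t)
    (heq : delta F g x s = delta F g x t) (r : ℝ) :
    delta F g x r = delta F g x s := by
  set Q := g.q with hQ
  set u : ℕ → ℝ := fun k => ((F s).canon ∘ g.canon)^[k] x with hu
  set v : ℕ → ℝ := fun k => ((F t).canon ∘ g.canon)^[k] x with hv
  have huQ : v Q = u Q := by
    have : u Q - x - (g.p : ℝ) = v Q - x - (g.p : ℝ) := heq
    linarith
  have hle : ∀ k, u k ≤ v k := fun k => h.iter_le g hst.le x k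
  -- one step of the downward argument
  have claim1 : ∀ k : ℕ, v (k + 1) = u (k + 1) → v k = u k ∧ u (k + 1) ∈ E := by
    intro k hvk
    have e1 : u (k + 1) = (F s).canon (g.canon (u k)) :=
      Function.iterate_succ_apply' ((F s).canon ∘ g.canon) k x
    have e2 : v (k + 1) = (F t).canon (g.canon (v k)) :=
      Function.iterate_succ_apply' ((F t).canon ∘ g.canon) k x
    have le1 : (F s).canon (g.canon (u k)) ≤ (F t).canon (g.canon (u k)) :=
      h.can_time_mono hst.le _
    have le2 : (F t).canon (g.canon (u k)) ≤ (F t).canon (g.canon (v k)) :=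
      ((F t).canon_strictMono.comp g.canon_strictMono).monotone (hle k)
    have eq1 : (F t).canon (g.canon (u k)) = (F s).canon (g.canon (u k)) := by
      have : (F t).canon (g.canon (v k)) = u (k + 1) := by rw [← e2, hvk]
      rw [e1] at this
      exact le_antisymm (le_trans le2 this.le) le1
    have eq2 : v k = u k := by
      have h3 : (F t).canon (g.canon (v k)) = (F t).canon (g.canon (u k)) := by
        rw [eq1, ← e1, ← hvk, e2]
      exact ((F t).canon_strictMono.comp g.canon_strictMono).injective h3
    refine ⟨eq2, ?_⟩
    by_contra hnotE
    have hfix : (F (t - s)).canon (u (k + 1)) = u (k + 1) := by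
      conv_lhs => rw [e1, h.canadd, sub_add_cancel, eq1, ← e1]
    exact (h.can_ne (by intro h0; apply absurd (sub_eq_zero.mp h0) hst.ne') hnotE) hfix
  -- downward induction
  have claim2 : ∀ j : ℕ, j ≤ Q →
      v (Q - j) = u (Q - j) ∧ ∀ k, Q - j < k → k ≤ Q → u k ∈ E := by
    intro j
    induction j with
    | zero => exact fun _ => ⟨huQ, fun k hk hk' => absurd (lt_of_lt_of_le hk hk') (by omega)⟩
    | succ j ih =>
      intro hj
      obtain ⟨ihv, ihE⟩ := ih (by omega)
      have hstep : Q - (j + 1) + 1 = Q - j := by omega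
      have := claim1 (Q - (j + 1)) (by rw [hstep]; exact ihv)
      refine ⟨this.1, fun k hk hk' => ?_⟩
      rcases eq_or_lt_of_le (by omega : Q - j ≤ k) with rfl | hk2
      · rw [← hstep]; exact this.2
      · exact ihE k hk2 hk'
  have hmem : ∀ k, 0 < k → k ≤ Q → u k ∈ E := by
    intro k hk hk'
    exact (claim2 Q le_rfl).2 k (by omega) hk'
  -- now identify the iterates for arbitrary r
  have claim3 : ∀ k : ℕ, k ≤ Q → ((F r).canon ∘ g.canon)^[k] x = u k := by
    intro k
    induction k with
    | zero => exact fun _ => rfl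
    | succ k ih =>
      intro hk
      rw [Function.iterate_succ_apply']
      have e1 : u (k + 1) = (F s).canon (g.canon (u k)) :=
        Function.iterate_succ_apply' ((F s).canon ∘ g.canon) k x
      have : ((F r).canon ∘ g.canon) (((F r).canon ∘ g.canon)^[k] x)
          = (F r).canon (g.canon (u k)) := by rw [ih (by omega)]; rfl
      rw [this]
      have : (F r).canon (g.canon (u k)) = (F (r - s)).canon (u (k + 1)) := by
        rw [e1, h.canadd, sub_add_cancel]
      rw [this, h.canE _ _ (hmem (k + 1) (by omega) hk), e1]
  show ((F r).canon ∘ g.canon)^[Q] x - x - (g.p : ℝ) = delta F g x s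
  rw [claim3 Q le_rfl]
  rfl

end GoodFam

namespace GoodFam

variable {F : ℝ → HomeoZR} {E : Set ℝ}

/-- Main-case conclusion. -/
lemma conclusion (h : GoodFam F E) (g : HomeoZR) :
    IsOpen (Uset F g) ∧ ∃ T : ℝ → ℝ, (∀ x ∈ Uset F g, delta F g x (T x) = 0) ∧
      ContinuousOn T (Uset F g) := by
  classical
  set T : ℝ → ℝ := fun x => sInf {t | delta F g x t = 0} with hT
  have Tspec : ∀ x t₀, delta F g x t₀ = 0 → (∀ t', delta F g x t' = 0 → t' = t₀) →
      T x = t₀ := by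
    intro x t₀ h0 huniq
    have hset : {t | delta F g x t = 0} = {t₀} := by
      ext t
      simp only [Set.mem_setOf_eq, Set.mem_singleton_iff]
      exact ⟨fun ht => huniq t ht, fun ht => ht ▸ h0⟩
    rw [hT]
    simp only [hset, csInf_singleton]
  have key : ∀ x₀ ∈ Uset F g, ∀ ε : ℝ, 0 < ε → ∃ δ > 0, ∀ y, dist y x₀ < δ →
      y ∈ Uset F g ∧ dist (T y) (T x₀) ≤ ε := by
    intro x₀ hx₀ ε hε
    obtain ⟨t₀, ht₀, huniq⟩ := hx₀
    have hTx₀ : T x₀ = t₀ := Tspec x₀ t₀ ht₀ (fun t' h' => huniq t' h')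
    have hneg : delta F g x₀ (t₀ - ε) < 0 := by
      have hle : delta F g x₀ (t₀ - ε) ≤ 0 := ht₀ ▸ h.delta_time_mono g (by linarith) x₀
      rcases lt_or_eq_of_le hle with h' | h'
      · exact h'
      · exact absurd (huniq _ h') (by intro hh; linarith [congrArg id hh])
    have hpos' : 0 < delta F g x₀ (t₀ + ε) := by
      have hle : 0 ≤ delta F g x₀ (t₀ + ε) := ht₀ ▸ h.delta_time_mono g (by linarith) x₀
      rcases lt_or_eq_of_le hle with h' | h'
      · exact h'
      · exact absurd (huniq _ h'.symm) (by intro hh; linarith [congrArg id hh])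
    have hopen : IsOpen {y : ℝ | delta F g y (t₀ - ε) < 0 ∧ 0 < delta F g y (t₀ + ε)} := by
      refine IsOpen.inter ?_ ?_
      · exact isOpen_lt (delta_cont_x g F (t₀ - ε)) continuous_const
      · exact isOpen_lt continuous_const (delta_cont_x g F (t₀ + ε))
    obtain ⟨δ, hδ, hball⟩ := Metric.isOpen_iff.mp hopen x₀ ⟨hneg, hpos'⟩
    refine ⟨δ, hδ, fun y hy => ?_⟩
    obtain ⟨hy1, hy2⟩ := hball (Metric.mem_ball.mpr hy)
    have hivt : ∃ ty ∈ Set.Icc (t₀ - ε) (t₀ + ε), delta F g y ty = 0 := by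
      have hsub := intermediate_value_Icc (by linarith : t₀ - ε ≤ t₀ + ε)
        ((h.delta_cont_t g y).continuousOn)
      have h0mem : (0 : ℝ) ∈ Set.Icc (delta F g y (t₀ - ε)) (delta F g y (t₀ + ε)) :=
        ⟨hy1.le, hy2.le⟩
      obtain ⟨ty, hty, h0⟩ := hsub h0mem
      exact ⟨ty, hty, h0⟩
    obtain ⟨ty, htymem, hty0⟩ := hivt
    have huniqy : ∀ t', delta F g y t' = 0 → t' = ty := by
      intro t' ht'
      by_contra hne
      rcases lt_or_gt_of_ne hne with hlt | hlt
      · have hcon := h.delta_const g hlt (by rw [ht', hty0]) (t₀ - ε)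
        rw [ht'] at hcon
        exact hy1.ne hcon
      · have hcon := h.delta_const g hlt (by rw [ht', hty0]) (t₀ - ε)
        rw [hty0] at hcon
        exact hy1.ne hcon
    have hyU : y ∈ Uset F g := ⟨ty, hty0, huniqy⟩
    have hTy : T y = ty := Tspec y ty hty0 huniqy
    refine ⟨hyU, ?_⟩
    rw [hTy, hTx₀, Real.dist_eq, abs_sub_le_iff]
    exact ⟨by linarith [htymem.2], by linarith [htymem.1]⟩
  constructor
  · rw [Metric.isOpen_iff]
    intro x₀ hx₀
    obtain ⟨δ, hδ, hball⟩ := key x₀ hx₀ 1 one_pos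
    exact ⟨δ, hδ, fun y hy => (hball y (Metric.mem_ball.mp hy)).1⟩
  · refine ⟨T, fun x hx => ?_, ?_⟩
    · obtain ⟨t₀, ht₀, huniq⟩ := hx
      rw [Tspec x t₀ ht₀ (fun t' h' => huniq t' h')]
      exact ht₀
    · intro x₀ hx₀
      apply ContinuousAt.continuousWithinAt
      rw [Metric.continuousAt_iff]
      intro ε hε
      obtain ⟨δ, hδ, hball⟩ := key x₀ hx₀ (ε / 2) (half_pos hε)
      exact ⟨δ, hδ, fun {y} hy => lt_of_le_of_lt (hball y hy).2 (by linarith)⟩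

end GoodFam

lemma F0_id (F : ℝ → HomeoZR)
    (hgrp : ∀ s t, (F (s + t)).toFun = (F s).toFun ∘ (F t).toFun) :
    ∀ x, (F 0).toFun x = x := by
  intro x
  have h1 : (F 0).toFun x = (F 0).toFun ((F 0).toFun x) := by
    have h2 := congrFun (hgrp 0 0) x
    rw [add_zero] at h2
    exact h2
  exact ((F 0).strictMono.injective h1.symm)

lemma goodFam_of_posFamily {f : HomeoZR} {F : ℝ → HomeoZR} (hF : PosFamily f F)
    {z₀ : ℝ} (hz₀ : z₀ ∈ frontier f.Per) : GoodFam F (frontier f.Per) := by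
  obtain ⟨hgrp, _hcomm, hfix, hpos⟩ := hF
  have hF0 := F0_id F hgrp
  have htau : ∀ t : ℝ, (F t).toFun z₀ = z₀ + (F t).transNum ∧
      ∃ m : ℤ, (F t).transNum = (m : ℝ) := by
    intro t
    by_cases ht : t = 0
    · subst ht
      have h0 : (F 0).transNum = ((0 : ℤ) : ℝ) :=
        CircleDeg1Lift.translationNumber_of_eq_add_int (F 0).toLift
          (x := 0) (by show (F 0).toFun 0 = 0 + ((0 : ℤ) : ℝ); rw [hF0 0]; norm_num)
      refine ⟨?_, 0, h0⟩
      rw [h0, hF0 z₀]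
      norm_num
    · have hz : z₀ ∈ (F t).FixS := by rw [hfix t ht]; exact hz₀
      obtain ⟨m, hm⟩ := hz
      have hτ : (F t).transNum = (m : ℝ) :=
        CircleDeg1Lift.translationNumber_of_eq_add_int (F t).toLift hm
      exact ⟨by rw [hτ]; exact hm, ⟨m, hτ⟩⟩
  have hcanon : ∀ t x, (F t).canon x = (F t).toFun x - (F t).transNum := by
    intro t x
    obtain ⟨m, hm⟩ := (htau t).2
    rw [HomeoZR.canon_def, hm, Int.floor_intCast]
  have htau0 : (F 0).transNum = 0 := by
    have h1 := (htau 0).1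
    rw [hF0 z₀] at h1
    linarith
  have hcan0 : ∀ x, (F 0).canon x = x := by
    intro x
    rw [hcanon, hF0, htau0, sub_zero]
  have hrhoadd : ∀ s t : ℝ, (F (s + t)).transNum = (F s).transNum + (F t).transNum := by
    intro s t
    obtain ⟨m, hm⟩ := (htau t).2
    have h1 := (htau (s + t)).1
    have h2 : (F (s + t)).toFun z₀ = (F s).toFun ((F t).toFun z₀) := congrFun (hgrp s t) z₀
    rw [(htau t).1, hm, (F s).map_add_int', (htau s).1] at h2
    rw [h2, ← hm] at h1
    linarith
  refine ⟨hcan0, ?_, ?_, hpos⟩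
  · intro t x hxE
    by_cases ht : t = 0
    · subst ht; exact hcan0 x
    · have hx : x ∈ (F t).FixS := by rw [hfix t ht]; exact hxE
      obtain ⟨m, hm⟩ := hx
      have hτ : (F t).transNum = (m : ℝ) :=
        CircleDeg1Lift.translationNumber_of_eq_add_int (F t).toLift hm
      rw [hcanon, hm, hτ]
      ring
  · intro s t x
    obtain ⟨m, hm⟩ := (htau t).2
    have hc : (F s).toFun ((F t).toFun x) = (F (s + t)).toFun x :=
      (congrFun (hgrp s t) x).symm
    rw [hcanon, hcanon, hcanon, hm, (F s).map_sub_int', hc, hrhoadd, hm]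
    ring

section EmptyCase

open CircleDeg1Lift

set_option maxHeartbeats 2000000 in
lemma empty_case_false (g : HomeoZR) (F : ℝ → HomeoZR)
    (hgrp : ∀ s t, (F (s + t)).toFun = (F s).toFun ∘ (F t).toFun)
    (hfixE : ∀ t : ℝ, t ≠ 0 → (F t).FixS = ∅)
    (hconst : ∀ t : ℝ, ∃ m : ℤ, ((F t).comp g).transNum = g.transNum + m) :
    False := by
  classical
  have hF0 := F0_id F hgrp
  set ρ : ℝ → ℝ := fun t => (F t).transNum with hρdef
  have hlift_mul : ∀ s t : ℝ, (F (s + t)).toLift = (F s).toLift * (F t).toLift := by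
    intro s t; ext x; exact congrFun (hgrp s t) x
  have hcomm : ∀ s t : ℝ, Commute (F s).toLift (F t).toLift := by
    intro s t
    show _ = _
    rw [← hlift_mul, ← hlift_mul, add_comm]
  have hadd : ∀ s t : ℝ, ρ (s + t) = ρ s + ρ t := by
    intro s t
    have h1 := translationNumber_mul_of_commute (hcomm s t)
    rw [← hlift_mul] at h1
    exact h1
  have hnotint : ∀ t : ℝ, t ≠ 0 → ∀ m : ℤ, ρ t ≠ (m : ℝ) := by
    intro t ht m hm
    obtain ⟨x, hx⟩ :=
      (translationNumber_eq_int_iff (F t).toLift (F t).continuousFun).1 hm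
    have hmem : x ∈ (F t).FixS := ⟨m, hx⟩
    rw [hfixE t ht] at hmem
    exact hmem
  have hρ0 : ρ 0 = 0 := by have := hadd 0 0; simp at this; linarith
  have hρinj : Function.Injective ρ := by
    intro a b hab
    by_contra hne
    have h1 : ρ (a - b) + ρ b = ρ a := by rw [← hadd, sub_add_cancel]
    have h2 : ρ (a - b) = ((0 : ℤ) : ℝ) := by rw [hab] at h1; push_cast; linarith
    exact hnotint (a - b) (sub_ne_zero.mpr hne) 0 h2
  set ρhom : ℝ →+ ℝ := AddMonoidHom.mk' ρ hadd with hρhom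
  set φ₁ : Multiplicative ℝ →* CircleDeg1Lift :=
    { toFun := fun t => (F (Multiplicative.toAdd t)).toLift
      map_one' := by ext x; exact hF0 x
      map_mul' := fun a b => hlift_mul _ _ } with hφ₁
  set φ₂ : Multiplicative ℝ →* CircleDeg1Lift :=
    (Units.coeHom CircleDeg1Lift).comp
      (translate.comp (AddMonoidHom.toMultiplicative ρhom)) with hφ₂
  have hφ₂app : ∀ t y : ℝ, φ₂ (Multiplicative.ofAdd t) y = ρ t + y := by
    intro t y
    rfl
  have hτeq : ∀ t, τ (φ₁ t) = τ (φ₂ t) := by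
    intro t
    have h2 : τ (φ₂ t) = ρ (Multiplicative.toAdd t) :=
      translationNumber_translate (ρ (Multiplicative.toAdd t))
    rw [h2]
    rfl
  obtain ⟨w, hw⟩ := semiconj_of_group_action_of_forall_translationNumber_eq φ₁ φ₂ hτeq
  have hwF : ∀ t x : ℝ, w ((F t).toFun x) = ρ t + w x := by
    intro t x
    exact hw (Multiplicative.ofAdd t) x
  -- `w` is injective
  have hwinj : Function.Injective ⇑w := by
    intro a b hab
    by_contra hne
    have main : ∀ a b : ℝ, a < b → w a = w b → False := by
      intro a b hlt hwab
      have hQ : ∀ t : ℝ, ∃ q : ℚ, (F t).toFun a < (q : ℝ) ∧ (q : ℝ) < (F t).toFun b :=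
        fun t => exists_rat_btwn ((F t).strictMono hlt)
      choose Q hQ1 hQ2 using hQ
      refine no_real_rat_injection Q ?_
      intro t t' htt'
      have hwq : ∀ s : ℝ, w (Q s) = ρ s + w a := by
        intro s
        have h1 : w ((F s).toFun a) ≤ w (Q s) := w.monotone (hQ1 s).le
        have h2 : w (Q s) ≤ w ((F s).toFun b) := w.monotone (hQ2 s).le
        rw [hwF] at h1
        rw [hwF, ← hwab] at h2
        linarith [hwF s a]
      have : ρ t + w a = ρ t' + w a := by rw [← hwq t, ← hwq t', htt']
      exact hρinj (by linarith : ρ t = ρ t')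
    rcases lt_or_gt_of_ne hne with h | h
    · exact main a b h hab
    · exact main b a h hab.symm
  -- `w` is surjective
  have hwsurj : Function.Surjective ⇑w := by
    intro y₀
    by_contra hno
    push_neg at hno
    set S : Set ℝ := {x | w x ≤ y₀} with hS
    have hSne : S.Nonempty := by
      refine ⟨y₀ - w 0 - 1, ?_⟩
      have h1 : w (y₀ - w 0 - 1) ≤ w 0 + ⌈y₀ - w 0 - 1⌉ := w.map_le_of_map_zero _
      have h2 : (⌈y₀ - w 0 - 1⌉ : ℝ) ≤ y₀ - w 0 - 1 + 1 := (Int.ceil_lt_add_one _).le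
      show w (y₀ - w 0 - 1) ≤ y₀
      linarith
    have hSbdd : BddAbove S := by
      refine ⟨y₀ - w 0 + 1, ?_⟩
      intro x hx
      have h1 : w 0 + ⌊x⌋ ≤ w x := w.le_map_of_map_zero x
      have h2 : x - 1 < (⌊x⌋ : ℝ) := Int.sub_one_lt_floor x
      have h3 : w x ≤ y₀ := hx
      linarith
    set j := sSup S with hj
    have hlt : ∀ x < j, w x ≤ y₀ := by
      intro x hx
      obtain ⟨x', hx'S, hxx'⟩ := exists_lt_of_lt_csSup hSne hx
      exact le_trans (w.monotone hxx'.le) hx'S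
    have hgt : ∀ x, j < x → y₀ < w x := by
      intro x hx
      by_contra hcon
      push_neg at hcon
      exact absurd (le_csSup hSbdd hcon) (not_le.2 hx)
    -- produce the jump data
    obtain ⟨α, β, hαβ, h1, h2⟩ :
        ∃ α β : ℝ, α < β ∧ (∀ x < j, w x ≤ α) ∧ (∀ x, j < x → β ≤ w x) := by
      rcases lt_or_gt_of_ne (hno j) with hcase | hcase
      · exact ⟨w j, y₀, hcase, fun x hx => w.monotone hx.le,
          fun x hx => (hgt x hx).le⟩
      · exact ⟨y₀, w j, hcase, hlt, fun x hx => w.monotone hx.le⟩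
    have hjump : ∀ t : ℝ, (∀ x < (F t).toFun j, w x ≤ ρ t + α) ∧
        (∀ x, (F t).toFun j < x → ρ t + β ≤ w x) := by
      intro t
      constructor
      · intro x hx
        have hinv : (F t).toFun ((F t).invFun x) = x := (F t).right_inv x
        have hxj : (F t).invFun x < j := by
          rw [← hinv] at hx
          exact ((F t).strictMono.lt_iff_lt).1 hx
        calc w x = w ((F t).toFun ((F t).invFun x)) := by rw [hinv]
          _ = ρ t + w ((F t).invFun x) := hwF t _
          _ ≤ ρ t + α := by linarith [h1 _ hxj]
      · intro x hx
        have hinv : (F t).toFun ((F t).invFun x) = x := (F t).right_inv x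
        have hxj : j < (F t).invFun x := by
          rw [← hinv] at hx
          exact ((F t).strictMono.lt_iff_lt).1 hx
        calc ρ t + β ≤ ρ t + w ((F t).invFun x) := by linarith [h2 _ hxj]
          _ = w ((F t).toFun ((F t).invFun x)) := (hwF t _).symm
          _ = w x := by rw [hinv]
    have hQ : ∀ t : ℝ, ∃ q : ℚ, ρ t + α < (q : ℝ) ∧ (q : ℝ) < ρ t + β :=
      fun t => exists_rat_btwn (by linarith)
    choose Q hQ1 hQ2 using hQ
    refine no_real_rat_injection Q ?_
    intro t t' htt'
    by_contra hne
    have hpne : (F t).toFun j ≠ (F t').toFun j := by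
      intro hp
      have : ρ t + w j = ρ t' + w j := by rw [← hwF t j, ← hwF t' j, hp]
      exact hne (hρinj (by linarith : ρ t = ρ t'))
    have main2 : ∀ t t' : ℝ, (F t).toFun j < (F t').toFun j →
        (Q t : ℝ) = (Q t' : ℝ) → False := by
      intro s s' hpp hqq
      set x := ((F s).toFun j + (F s').toFun j) / 2 with hx
      have hx1 : (F s).toFun j < x := by rw [hx]; linarith
      have hx2 : x < (F s').toFun j := by rw [hx]; linarith
      have hw1 : ρ s + β ≤ w x := (hjump s).2 x hx1
      have hw2 : w x ≤ ρ s' + α := (hjump s').1 x hx2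
      have := hQ2 s
      have := hQ1 s'
      linarith
    rcases lt_or_gt_of_ne hpne with hpp | hpp
    · exact main2 t t' hpp (by rw [htt'])
    · exact main2 t' t hpp (by rw [htt'])
  have hwcont : Continuous ⇑w := (continuous_iff_surjective w).2 hwsurj
  obtain ⟨W, hW⟩ := isUnit_iff_bijective.2 ⟨hwinj, hwsurj⟩
  set T1 : ℝ → CircleDeg1Lift := fun β => ↑(translate (Multiplicative.ofAdd β)) with hT1
  have hT1app : ∀ β z : ℝ, T1 β z = β + z := fun β z => rfl
  set hh : CircleDeg1Lift := ↑W * g.toLift * ↑W⁻¹ with hhh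
  have hWapp : ∀ z : ℝ, (↑W : CircleDeg1Lift) z = w z := fun z => by rw [hW]
  have hconj : ∀ t : ℝ, (F t).toLift * g.toLift = ↑W⁻¹ * (T1 (ρ t) * hh) * ↑W := by
    intro t
    ext z
    simp only [mul_apply, hhh]
    rw [units_inv_apply_apply]
    have e2 : T1 (ρ t) ((↑W : CircleDeg1Lift) (g.toLift z)) =
        (↑W : CircleDeg1Lift) ((F t).toFun (g.toFun z)) := by
      rw [hT1app, hWapp, hWapp]
      exact (hwF t _).symm
    rw [e2, units_inv_apply_apply]
    rfl
  set V : ℝ → ℝ := fun β => τ (T1 β * hh) with hV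
  have hVρ : ∀ t : ℝ, V (ρ t) = τ ((F t).toLift * g.toLift) := by
    intro t
    rw [hconj t]
    exact (translationNumber_conj_eq' W _).symm
  have hVconst : ∀ t : ℝ, ∃ m : ℤ, V (ρ t) = g.transNum + m := by
    intro t
    obtain ⟨m, hm⟩ := hconst t
    refine ⟨m, ?_⟩
    rw [hVρ t, ← HomeoZR.toLift_comp]
    exact hm
  have hτhh : τ hh = g.transNum := by
    rw [hhh]
    exact translationNumber_conj_eq W g.toLift
  have hV0 : V 0 = g.transNum := by
    have hone : T1 0 = 1 := by
      rw [hT1]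
      show (↑(translate (Multiplicative.ofAdd (0:ℝ))) : CircleDeg1Lift) = 1
      rw [ofAdd_zero, map_one, Units.val_one]
    rw [hV]
    show τ (T1 0 * hh) = g.transNum
    rw [hone, one_mul, hτhh]
  have hV1 : V 1 = g.transNum + 1 := by
    have hcommT : Commute (T1 1) hh := by
      show _ = _
      ext z
      simp only [mul_apply, hT1app]
      exact (hh.map_one_add z).symm
    show τ (T1 1 * hh) = g.transNum + 1
    rw [translationNumber_mul_of_commute hcommT]
    have : τ (T1 1) = 1 := translationNumber_translate 1
    rw [this, hτhh]
    ring
  have hVmono : Monotone V := by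
    intro β β' hββ'
    refine translationNumber_mono ?_
    intro z
    simp only [mul_apply, hT1app]
    linarith
  have hWinvcont : Continuous ⇑(↑W⁻¹ : CircleDeg1Lift) :=
    (continuous_iff_surjective _).2
      (fun y => ⟨(↑W : CircleDeg1Lift) y, units_inv_apply_apply W y⟩)
  have hhhcont : Continuous ⇑hh := by
    rw [hhh, coe_mul, coe_mul]
    have hWc : Continuous ⇑(↑W : CircleDeg1Lift) := by rw [hW]; exact hwcont
    exact hWc.comp ((g.continuousFun).comp hWinvcont)
  have hitcont : ∀ n : ℕ, Continuous fun β : ℝ => (fun z => β + hh z)^[n] 0 := by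
    intro n
    induction n with
    | zero => simpa using continuous_const
    | succ n ih =>
      have hrw : (fun β : ℝ => (fun z => β + hh z)^[n + 1] 0)
          = fun β : ℝ => β + hh ((fun z => β + hh z)^[n] 0) := by
        funext β
        rw [Function.iterate_succ_apply']
      rw [hrw]
      exact continuous_id.add (hhhcont.comp ih)
  have hcoe : ∀ (β : ℝ) (n : ℕ), ((T1 β * hh) ^ n) 0 = (fun z => β + hh z)^[n] 0 := by
    intro β n
    rw [coe_pow]
    have : ⇑(T1 β * hh) = fun z => β + hh z := by
      funext z
      rw [mul_apply, hT1app]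
    rw [this]
  set seq : ℕ → ℝ → ℝ := fun n β => ((T1 β * hh) ^ (n + 1)) 0 / (n + 1) with hseq
  have hseqcont : ∀ n : ℕ, Continuous (seq n) := by
    intro n
    have : seq n = fun β => (fun z => β + hh z)^[n + 1] 0 / (n + 1) := by
      funext β
      rw [hseq]
      simp only [hcoe]
    rw [this]
    exact (hitcont (n + 1)).div_const _
  have arith : ∀ a t c : ℝ, 0 < c → |a - c * t| ≤ 1 → |a / c - t| ≤ 1 / c := by
    intro a t c hc hle
    have hrw : a / c - t = (a - c * t) / c := by field_simp
    rw [hrw, abs_div, abs_of_pos hc]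
    rw [div_le_div_iff₀ hc hc]
    nlinarith [abs_nonneg (a - c * t)]
  have hbound : ∀ (n : ℕ) (β : ℝ), dist (V β) (seq n β) ≤ 1 / ((n : ℝ) + 1) := by
    intro n β
    have h1 := dist_pow_map_zero_mul_translationNumber_le (T1 β * hh) (n + 1)
    rw [Real.dist_eq] at h1
    have hn1 : (0:ℝ) < (n:ℝ) + 1 := by positivity
    rw [dist_comm, Real.dist_eq]
    show |((T1 β * hh) ^ (n + 1)) 0 / ((n:ℝ) + 1) - V β| ≤ 1 / ((n:ℝ) + 1)
    refine arith _ _ _ hn1 ?_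
    have hcast : ((n + 1 : ℕ) : ℝ) = (n : ℝ) + 1 := by push_cast; ring
    rw [← hcast]
    exact h1
  have huniform : TendstoUniformly seq V Filter.atTop := by
    rw [Metric.tendstoUniformly_iff]
    intro ε hε
    obtain ⟨N, hN⟩ := exists_nat_gt (1 / ε)
    refine Filter.eventually_atTop.2 ⟨N, fun n hn β => ?_⟩
    have h1 := hbound n β
    have hn1 : (0:ℝ) < (n:ℝ) + 1 := by positivity
    have h2 : 1 / ((n:ℝ) + 1) < ε := by
      rw [div_lt_iff₀ hn1]
      have hNn : (N : ℝ) ≤ (n : ℝ) := by exact_mod_cast hn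
      rcases le_or_gt ε 0 with hε0 | hε0
      · linarith
      · rw [div_lt_iff₀ hε0] at hN
        nlinarith
    exact lt_of_le_of_lt h1 h2
  have hVcont : Continuous V :=
    huniform.continuous (Filter.Eventually.of_forall hseqcont).frequently
  obtain ⟨b₀, _hb₀mem, hb₀val⟩ : ∃ b ∈ Set.Icc (0:ℝ) 1, V b = g.transNum + 1/2 := by
    have hsub := intermediate_value_Icc (zero_le_one) hVcont.continuousOn
    have hmem : g.transNum + 1/2 ∈ Set.Icc (V 0) (V 1) := by
      rw [hV0, hV1]
      constructor <;> linarith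
    obtain ⟨b, hb, hb'⟩ := hsub hmem
    exact ⟨b, hb, hb'⟩
  set U : Set ℝ := V ⁻¹' (Set.Ioo (g.transNum + 1/4) (g.transNum + 3/4)) with hU
  have hUopen : IsOpen U := isOpen_Ioo.preimage hVcont
  have hUne : U.Nonempty := by
    refine ⟨b₀, ?_⟩
    rw [hU, Set.mem_preimage, hb₀val]
    constructor <;> norm_num
  have hdense : Dense ((AddMonoidHom.range ρhom : AddSubgroup ℝ) : Set ℝ) := by
    rcases (AddMonoidHom.range ρhom).dense_or_cyclic with hd | ⟨a, ha⟩
    · exact hd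
    · exfalso
      have hmemA : ∀ x : ℝ, ρ x ∈ AddMonoidHom.range ρhom := fun x => ⟨x, rfl⟩
      have hρ1 : ρ 1 ≠ 0 := by
        intro h0
        exact hnotint 1 one_ne_zero 0 (by rw [h0]; norm_num)
      obtain ⟨n, hn⟩ := AddSubgroup.mem_closure_singleton.1 (ha ▸ hmemA 1)
      have ha0 : a ≠ 0 := by
        intro h0
        rw [h0, smul_zero] at hn
        exact hρ1 hn.symm
      obtain ⟨k, hk⟩ := pow_unbounded_of_one_lt (|(n:ℝ)|) (one_lt_two)
      obtain ⟨m, hm⟩ := AddSubgroup.mem_closure_singleton.1 (ha ▸ hmemA (1 / 2 ^ k))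
      have hmne : m ≠ 0 := by
        intro h0
        rw [h0, zero_smul] at hm
        refine hnotint (1 / 2 ^ k) (by positivity) 0 ?_
        rw [← hm]
        norm_num
      have hsum : (2 ^ k : ℕ) • ρ (1 / 2 ^ k) = ρ 1 := by
        have := map_nsmul ρhom (2 ^ k) (1 / 2 ^ k : ℝ)
        have harg : (2 ^ k : ℕ) • (1 / 2 ^ k : ℝ) = 1 := by
          rw [nsmul_eq_mul]
          push_cast
          field_simp
        rw [harg] at this
        exact this.symm
      have heq : ((2:ℝ) ^ k * (m : ℝ)) * a = (n : ℝ) * a := by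
        have e1 : ((2 ^ k : ℕ) : ℝ) * (ρ (1 / 2 ^ k)) = ρ 1 := by
          rw [← nsmul_eq_mul]
          exact hsum
        rw [← hm, ← hn, zsmul_eq_mul, zsmul_eq_mul] at e1
        push_cast at e1 ⊢
        linarith
      have heqint : (2:ℝ) ^ k * (m : ℝ) = (n : ℝ) := mul_right_cancel₀ ha0 heq
      have habs : (2:ℝ) ^ k ≤ |(n : ℝ)| := by
        rw [← heqint, abs_mul, abs_of_pos (by positivity : (0:ℝ) < (2:ℝ) ^ k)]
        have h1 : (1:ℝ) ≤ |(m:ℝ)| := by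
          rw [← Int.cast_abs]
          exact_mod_cast Int.one_le_abs hmne
        nlinarith [pow_pos (by norm_num : (0:ℝ) < 2) k]
      linarith
  obtain ⟨v, hvA, hvU⟩ := hdense.exists_mem_open hUopen hUne
  obtain ⟨t, ht⟩ := hvA
  obtain ⟨m, hm⟩ := hVconst t
  have hVv : V v ∈ Set.Ioo (g.transNum + 1/4) (g.transNum + 3/4) := hvU
  have hVveq : V v = g.transNum + m := by
    have : ρ t = v := ht
    rw [← this]
    exact hm
  rw [hVveq] at hVv
  obtain ⟨hlo, hhi⟩ := hVv
  have h14 : (1:ℝ)/4 < (m:ℝ) := by linarith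
  have h34 : (m:ℝ) < 3/4 := by linarith
  rcases le_or_gt m 0 with hm0 | hm0
  · have : (m:ℝ) ≤ 0 := by exact_mod_cast hm0
    linarith
  · have : (1:ℤ) ≤ m := hm0
    have : (1:ℝ) ≤ (m:ℝ) := by exact_mod_cast this
    linarith

end EmptyCase

/-- Lemma 2.5 (3). `U(f,g)` is open and the time map
`T : U(f,g) → ℝ` is continuous. -/
theorem Uset_isOpen_time_continuous (f g : HomeoZR)
    (hf : RatRot f) (hg : RatRot g)
    (F : ℝ → HomeoZR) (hF : PosFamily f F)
    (hconst : ∀ t : ℝ, ∃ m : ℤ, ((F t).comp g).transNum = g.transNum + m) :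
    IsOpen (Uset F g) ∧
    ∃ T : ℝ → ℝ, (∀ x ∈ Uset F g, delta F g x (T x) = 0) ∧
      ContinuousOn T (Uset F g) := by
  rcases Set.eq_empty_or_nonempty (frontier f.Per) with hE | ⟨z₀, hz₀⟩
  · exact (empty_case_false g F hF.1
      (fun t ht => by rw [hF.2.2.1 t ht]; exact hE) hconst).elim
  · exact (goodFam_of_posFamily hF hz₀).conclusion g
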